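/- arXiv:2002.10400 — 4 statements merged into one kernel-verified Lean document; each statement's English description precedes it below -/
import Mathlib

section
/- Let (σ_1,…,σ_n) be a uniformly random permutation of the multiset containing n/2 copies of +1 and n/2 copies of −1, where n ≥ 256 is a multiple of 4. Then for any i ≤ n/2, E[|∑_{p=1}^i σ_p|] ≥ √i / 32. -/
set_option maxHeartbeats 1000000
open Finset

lemma count_all_true (n m : ℕ) (U : Finset (Fin n)) (hU : U.card ≤ m) :
    ((univ.filter (fun σ : Fin n → Bool => (univ.filter (fun p => σ p = true)).card = m)).filter
      (fun σ => ∀ u ∈ U, σ u = true)).card = (n - U.card).choose (m - U.card) := by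
  have hcardsdiff : ((univ : Finset (Fin n)) \ U).card = n - U.card := by
    rw [card_sdiff_of_subset (subset_univ U), card_univ, Fintype.card_fin]
  rw [← hcardsdiff, ← Finset.card_powersetCard (m - U.card) ((univ : Finset (Fin n)) \ U)]
  apply Finset.card_bij' (fun σ _ => (univ.filter (fun p => σ p = true)) \ U)
    (fun T _ => fun p => decide (p ∈ T ∪ U))
  · intro σ hσ
    simp only [mem_filter, mem_univ, true_and] at hσ
    obtain ⟨h1, h2⟩ := hσ
    have hsub : U ⊆ univ.filter (fun p => σ p = true) := by
      intro u hu; simp only [mem_filter, mem_univ, true_and]; exact h2 u hu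
    rw [mem_powersetCard]
    constructor
    · exact sdiff_subset_sdiff (subset_univ _) (le_refl U)
    · rw [card_sdiff_of_subset hsub, h1]
  · intro T hT
    rw [mem_powersetCard] at hT
    obtain ⟨hTsub, hTcard⟩ := hT
    have hdisj : Disjoint T U := disjoint_of_subset_left hTsub sdiff_disjoint
    simp only [mem_filter, mem_univ, true_and]
    constructor
    · have : (univ.filter (fun p => decide (p ∈ T ∪ U) = true)) = T ∪ U := by
        ext p; simp
      rw [this, card_union_of_disjoint hdisj, hTcard, Nat.sub_add_cancel hU]
    · intro u hu; simp [mem_union, hu]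
  · intro σ hσ
    simp only [mem_filter, mem_univ, true_and] at hσ
    obtain ⟨h1, h2⟩ := hσ
    have hsub : U ⊆ univ.filter (fun p => σ p = true) := by
      intro u hu; simp only [mem_filter, mem_univ, true_and]; exact h2 u hu
    funext p
    rw [Finset.sdiff_union_of_subset hsub]
    by_cases h : σ p = true <;> simp [h]
  · intro T hT
    rw [mem_powersetCard] at hT
    obtain ⟨hTsub, hTcard⟩ := hT
    have hdisj : Disjoint T U := disjoint_of_subset_left hTsub sdiff_disjoint
    have : (univ.filter (fun p => decide (p ∈ T ∪ U) = true)) = T ∪ U := by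
      ext p; simp
    rw [this, union_sdiff_cancel_right hdisj]

lemma sum_prod_eps (n m : ℕ) (U : Finset (Fin n)) (hU : U.card ≤ m) :
    ∑ σ ∈ (univ.filter (fun σ : Fin n → Bool =>
        (univ.filter (fun p => σ p = true)).card = m)),
      ∏ u ∈ U, (if σ u then (1:ℝ) else -1)
    = ∑ j ∈ range (U.card + 1), (U.card.choose j : ℝ) * (-1)^(U.card - j) * 2^j *
        ((n - j).choose (m - j) : ℝ) := by
  set S := (univ.filter (fun σ : Fin n → Bool =>
      (univ.filter (fun p => σ p = true)).card = m)) with hS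
  have step1 : ∀ σ : Fin n → Bool, ∏ u ∈ U, (if σ u then (1:ℝ) else -1)
      = ∑ V ∈ U.powerset, (-1)^(U.card - V.card) * 2^V.card *
          (if ∀ v ∈ V, σ v = true then (1:ℝ) else 0) := by
    intro σ
    have : ∀ u : Fin n, (if σ u then (1:ℝ) else -1)
        = (2 * (if σ u then (1:ℝ) else 0)) + (-1) := by
      intro u; by_cases h : σ u = true <;> simp [h] <;> norm_num
    simp_rw [this]
    rw [Finset.prod_add]
    apply Finset.sum_congr rfl
    intro V hV
    rw [mem_powerset] at hV
    rw [Finset.prod_mul_distrib, Finset.prod_const, Finset.prod_const,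
      card_sdiff_of_subset hV, Finset.prod_boole]
    ring
  simp_rw [step1]
  rw [Finset.sum_comm]
  have step2 : ∀ V ∈ U.powerset,
      ∑ σ ∈ S, ((-1:ℝ)^(U.card - V.card) * 2^V.card *
          (if ∀ v ∈ V, σ v = true then (1:ℝ) else 0))
      = (-1)^(U.card - V.card) * 2^V.card * ((n - V.card).choose (m - V.card) : ℝ) := by
    intro V hV
    rw [mem_powerset] at hV
    rw [← Finset.mul_sum, Finset.sum_boole, ← count_all_true n m V
      (le_trans (card_le_card hV) hU)]
  rw [Finset.sum_congr rfl step2, Finset.sum_powerset]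
  apply Finset.sum_congr rfl
  intro j hj
  have : ∀ t ∈ powersetCard j U, ((-1:ℝ)^(U.card - t.card) * 2^t.card *
      ((n - t.card).choose (m - t.card) : ℝ))
      = (-1)^(U.card - j) * 2^j * ((n - j).choose (m - j) : ℝ) := by
    intro t ht
    rw [(mem_powersetCard.mp ht).2]
  rw [Finset.sum_congr rfl this, Finset.sum_const, Finset.card_powersetCard, nsmul_eq_mul]
  ring

lemma cast_choose_pred (N K : ℕ) (hN : 1 ≤ N) (hK : 1 ≤ K) :
    (N : ℝ) * (((N-1).choose (K-1) : ℕ) : ℝ) = ((N.choose K : ℕ) : ℝ) * K := by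
  have := Nat.add_one_mul_choose_eq (N-1) (K-1)
  rw [show N-1+1 = N from by omega, show K-1+1 = K from by omega] at this
  exact_mod_cast congrArg (Nat.cast : ℕ → ℝ) this

lemma binom_identities (n m : ℕ) (hm : 2*m = n) (hn : 16 ≤ n) :
    ((n:ℝ)-1) * ((n.choose m : ℝ) - 4*(((n-1).choose (m-1) : ℕ) : ℝ)
        + 4*(((n-2).choose (m-2) : ℕ) : ℝ)) = -(n.choose m : ℝ)
    ∧ ((n:ℝ)-1)*((n:ℝ)-3) * ((n.choose m : ℝ) - 8*(((n-1).choose (m-1) : ℕ) : ℝ)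
        + 24*(((n-2).choose (m-2) : ℕ) : ℝ) - 32*(((n-3).choose (m-3) : ℕ) : ℝ)
        + 16*(((n-4).choose (m-4) : ℕ) : ℝ)) = 3*(n.choose m : ℝ) := by
  have hm8 : 8 ≤ m := by omega
  have h1 := cast_choose_pred n m (by omega) (by omega)
  have h2 := cast_choose_pred (n-1) (m-1) (by omega) (by omega)
  have h3 := cast_choose_pred (n-2) (m-2) (by omega) (by omega)
  have h4 := cast_choose_pred (n-3) (m-3) (by omega) (by omega)
  rw [show n-1-1 = n-2 from by omega, show m-1-1 = m-2 from by omega] at h2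
  rw [show n-2-1 = n-3 from by omega, show m-2-1 = m-3 from by omega] at h3
  rw [show n-3-1 = n-4 from by omega, show m-3-1 = m-4 from by omega] at h4
  have c1 : ((n-1 : ℕ) : ℝ) = (n:ℝ) - 1 := by push_cast [Nat.cast_sub (by omega : 1 ≤ n)]; ring
  have c2 : ((n-2 : ℕ) : ℝ) = (n:ℝ) - 2 := by push_cast [Nat.cast_sub (by omega : 2 ≤ n)]; ring
  have c3 : ((n-3 : ℕ) : ℝ) = (n:ℝ) - 3 := by push_cast [Nat.cast_sub (by omega : 3 ≤ n)]; ring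
  have d1 : ((m-1 : ℕ) : ℝ) = (m:ℝ) - 1 := by push_cast [Nat.cast_sub (by omega : 1 ≤ m)]; ring
  have d2 : ((m-2 : ℕ) : ℝ) = (m:ℝ) - 2 := by push_cast [Nat.cast_sub (by omega : 2 ≤ m)]; ring
  have d3 : ((m-3 : ℕ) : ℝ) = (m:ℝ) - 3 := by push_cast [Nat.cast_sub (by omega : 3 ≤ m)]; ring
  rw [c1, d1] at h2
  rw [c2, d2] at h3
  rw [c3, d3] at h4
  set C0 := (n.choose m : ℝ)
  set C1 := (((n-1).choose (m-1) : ℕ) : ℝ)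
  set C2 := (((n-2).choose (m-2) : ℕ) : ℝ)
  set C3 := (((n-3).choose (m-3) : ℕ) : ℝ)
  set C4 := (((n-4).choose (m-4) : ℕ) : ℝ)
  have hmr : (n:ℝ) = 2*(m:ℝ) := by exact_mod_cast congrArg (Nat.cast : ℕ → ℝ) hm.symm
  have hn0 : (n:ℝ) ≠ 0 := by positivity
  have hnR : (16:ℝ) ≤ (n:ℝ) := by exact_mod_cast hn
  have hn1 : (n:ℝ) - 1 ≠ 0 := by nlinarith
  have hn2 : (n:ℝ) - 2 ≠ 0 := by nlinarith
  have hn3 : (n:ℝ) - 3 ≠ 0 := by nlinarith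
  have hc1 : C1 = C0 * m / n := by field_simp; linarith [h1]
  have hc2 : C2 = C1 * ((m:ℝ)-1) / ((n:ℝ)-1) := by field_simp; linarith [h2]
  have hc3 : C3 = C2 * ((m:ℝ)-2) / ((n:ℝ)-2) := by field_simp; linarith [h3]
  have hc4 : C4 = C3 * ((m:ℝ)-3) / ((n:ℝ)-3) := by field_simp; linarith [h4]
  rw [hc4, hc3, hc2, hc1]
  have hm2 : (m:ℝ) = (n:ℝ)/2 := by rw [hmr]; ring
  rw [hm2]
  constructor
  · field_simp
    ring
  · field_simp
    ring

lemma pair_val (n m : ℕ) (hm : 2*m = n) (hn : 16 ≤ n) (a b : Fin n) (hab : a ≠ b) :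
    ∑ σ ∈ (univ.filter (fun σ : Fin n → Bool =>
        (univ.filter (fun p => σ p = true)).card = m)),
      (if σ a then (1:ℝ) else -1) * (if σ b then (1:ℝ) else -1)
    = -(n.choose m : ℝ) / ((n:ℝ)-1) := by
  have hU : ({a, b} : Finset (Fin n)).card = 2 := by
    rw [card_insert_of_notMem (by simp [hab]), card_singleton]
  have h := sum_prod_eps n m {a,b} (by rw [hU]; omega)
  rw [hU] at h
  have hL : ∀ σ : Fin n → Bool, ∏ u ∈ ({a,b} : Finset (Fin n)),
      (if σ u then (1:ℝ) else -1)
      = (if σ a then (1:ℝ) else -1) * (if σ b then (1:ℝ) else -1) := fun σ =>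
    Finset.prod_pair hab
  rw [← Finset.sum_congr rfl (fun σ _ => hL σ), h]
  rw [Finset.sum_range_succ, Finset.sum_range_succ, Finset.sum_range_succ,
    Finset.sum_range_zero]
  norm_num
  have I := (binom_identities n m hm hn).1
  have hnR : (16:ℝ) ≤ (n:ℝ) := by exact_mod_cast hn
  have hn1 : (n:ℝ) - 1 ≠ 0 := by nlinarith
  field_simp
  linarith [I]

lemma quad_val (n m : ℕ) (hm : 2*m = n) (hn : 16 ≤ n) (a b c d : Fin n)
    (hab : a ≠ b) (hac : a ≠ c) (had : a ≠ d) (hbc : b ≠ c) (hbd : b ≠ d) (hcd : c ≠ d) :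
    ∑ σ ∈ (univ.filter (fun σ : Fin n → Bool =>
        (univ.filter (fun p => σ p = true)).card = m)),
      (if σ a then (1:ℝ) else -1) * (if σ b then (1:ℝ) else -1) *
      ((if σ c then (1:ℝ) else -1) * (if σ d then (1:ℝ) else -1))
    = 3*(n.choose m : ℝ) / (((n:ℝ)-1)*((n:ℝ)-3)) := by
  have hU : ({a, b, c, d} : Finset (Fin n)).card = 4 := by
    rw [card_insert_of_notMem (by simp [hab, hac, had]),
      card_insert_of_notMem (by simp [hbc, hbd]),
      card_insert_of_notMem (by simp [hcd]), card_singleton]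
  have h := sum_prod_eps n m {a,b,c,d} (by rw [hU]; omega)
  rw [hU] at h
  have hL : ∀ σ : Fin n → Bool, ∏ u ∈ ({a,b,c,d} : Finset (Fin n)),
      (if σ u then (1:ℝ) else -1)
      = (if σ a then (1:ℝ) else -1) * (if σ b then (1:ℝ) else -1) *
        ((if σ c then (1:ℝ) else -1) * (if σ d then (1:ℝ) else -1)) := by
    intro σ
    rw [Finset.prod_insert (by simp [hab, hac, had]),
      Finset.prod_insert (by simp [hbc, hbd]), Finset.prod_pair hcd]
    ring
  rw [← Finset.sum_congr rfl (fun σ _ => hL σ), h]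
  rw [Finset.sum_range_succ, Finset.sum_range_succ, Finset.sum_range_succ,
    Finset.sum_range_succ, Finset.sum_range_succ, Finset.sum_range_zero]
  norm_num [Nat.choose]
  have I := (binom_identities n m hm hn).2
  have hnR : (16:ℝ) ≤ (n:ℝ) := by exact_mod_cast hn
  have hn1 : (n:ℝ) - 1 ≠ 0 := by nlinarith
  have hn3 : (n:ℝ) - 3 ≠ 0 := by nlinarith
  rw [eq_div_iff (mul_ne_zero hn1 hn3)]
  linear_combination I

lemma key_numeric {α : Type*} (S : Finset α) (X : α → ℝ) (N iR : ℝ)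
    (hN : 0 < N) (hiR : 1 ≤ iR)
    (hcard : (S.card : ℝ) = N)
    (h2 : iR * N / 3 ≤ ∑ σ ∈ S, (X σ)^2)
    (h4 : ∑ σ ∈ S, (X σ)^4 ≤ 4 * iR^2 * N) :
    (∑ σ ∈ S, |X σ|) / N ≥ Real.sqrt iR / 32 := by
  set A1 := ∑ σ ∈ S, |X σ| with hA1def
  set A2 := ∑ σ ∈ S, (X σ)^2 with hA2def
  set A3 := ∑ σ ∈ S, |X σ|^3 with hA3def
  set A4 := ∑ σ ∈ S, (X σ)^4 with hA4def
  have hA1 : 0 ≤ A1 := Finset.sum_nonneg fun σ _ => abs_nonneg _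
  have hA3 : 0 ≤ A3 := Finset.sum_nonneg fun σ _ => pow_nonneg (abs_nonneg _) 3
  have CS1 : A2^2 ≤ A1 * A3 := by
    have h := Finset.sum_mul_sq_le_sq_mul_sq S (fun σ => Real.sqrt |X σ|)
      (fun σ => |X σ| * Real.sqrt |X σ|)
    have e1 : ∀ σ : α, Real.sqrt |X σ| * (|X σ| * Real.sqrt |X σ|) = (X σ)^2 := by
      intro σ
      rw [show Real.sqrt |X σ| * (|X σ| * Real.sqrt |X σ|)
          = (Real.sqrt |X σ| * Real.sqrt |X σ|) * |X σ| from by ring,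
        Real.mul_self_sqrt (abs_nonneg _), ← sq_abs]
      ring
    have e2 : ∀ σ : α, (Real.sqrt |X σ|)^2 = |X σ| := fun σ =>
      Real.sq_sqrt (abs_nonneg _)
    have e3 : ∀ σ : α, (|X σ| * Real.sqrt |X σ|)^2 = |X σ|^3 := by
      intro σ
      rw [mul_pow, Real.sq_sqrt (abs_nonneg _)]
      ring
    calc A2^2 = (∑ σ ∈ S, Real.sqrt |X σ| * (|X σ| * Real.sqrt |X σ|))^2 := by
          rw [Finset.sum_congr rfl fun σ _ => (e1 σ)]
      _ ≤ (∑ σ ∈ S, (Real.sqrt |X σ|)^2) * ∑ σ ∈ S, (|X σ| * Real.sqrt |X σ|)^2 := h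
      _ = A1 * A3 := by
          rw [Finset.sum_congr rfl fun σ _ => (e2 σ), Finset.sum_congr rfl fun σ _ => (e3 σ)]
  have CS2 : A3^2 ≤ A2 * A4 := by
    have h := Finset.sum_mul_sq_le_sq_mul_sq S (fun σ => |X σ|) (fun σ => (X σ)^2)
    have e1 : ∀ σ : α, |X σ| * (X σ)^2 = |X σ|^3 := by
      intro σ; rw [← sq_abs]; ring
    have e2 : ∀ σ : α, ((X σ)^2)^2 = (X σ)^4 := by intro σ; ring
    calc A3^2 = (∑ σ ∈ S, |X σ| * (X σ)^2)^2 := by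
          rw [Finset.sum_congr rfl fun σ _ => (e1 σ)]
      _ ≤ (∑ σ ∈ S, |X σ|^2) * ∑ σ ∈ S, ((X σ)^2)^2 := h
      _ = A2 * A4 := by
          rw [Finset.sum_congr rfl fun σ _ => (sq_abs (X σ)),
            Finset.sum_congr rfl fun σ _ => (e2 σ)]
  have hA2pos : 0 < A2 := lt_of_lt_of_le (by positivity) h2
  have t2 : A2^4 ≤ A1^2 * (A2 * A4) := by
    have s1 : A2^4 ≤ (A1*A3)^2 := by nlinarith [sq_nonneg A2]
    have s2 : (A1*A3)^2 ≤ A1^2 * (A2*A4) := by nlinarith [sq_nonneg A1]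
    linarith
  have h24 : A2^3 ≤ A1^2 * A4 := by nlinarith [hA2pos, sq_nonneg A2]
  have hA1sq : iR * N^2 / 108 ≤ A1^2 := by
    have c1 : (iR * N / 3)^3 ≤ A2^3 := by
      apply pow_le_pow_left₀ (by positivity) h2
    have c2 : A1^2 * A4 ≤ A1^2 * (4 * iR^2 * N) := by nlinarith [sq_nonneg A1]
    have c3 : (iR * N / 3)^3 ≤ A1^2 * (4 * iR^2 * N) := by linarith
    have hpos : 0 < 4 * iR^2 * N := by positivity
    have heq : iR * N^2 / 108 * (4 * iR^2 * N) = (iR * N / 3)^3 := by ring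
    exact le_of_mul_le_mul_right (by rw [heq]; linarith) hpos
  have hs : Real.sqrt iR ^ 2 = iR := Real.sq_sqrt (by linarith)
  have hs0 : 0 ≤ Real.sqrt iR := Real.sqrt_nonneg _
  have hsq : (Real.sqrt iR * N)^2 ≤ (32 * A1)^2 := by
    rw [mul_pow, hs]; nlinarith
  have hfin : Real.sqrt iR * N ≤ 32 * A1 := by
    have h32 : 0 ≤ 32 * A1 := by linarith
    nlinarith [hsq, mul_nonneg hs0 hN.le, h32]
  rw [ge_iff_le, div_le_div_iff₀ (by norm_num) hN]
  linarith

lemma sq_decomp (n : ℕ) (I : Finset (Fin n)) (σ : Fin n → Bool) :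
    (∑ p ∈ I, (if σ p then (1:ℝ) else -1))^2
    = (I.card : ℝ) + ∑ x ∈ I.offDiag,
        (if σ x.1 then (1:ℝ) else -1) * (if σ x.2 then (1:ℝ) else -1) := by
  rw [sq, Finset.sum_mul_sum, ← Finset.sum_product', ← Finset.diag_union_offDiag I,
    Finset.sum_union (Finset.disjoint_diag_offDiag I)]
  congr 1
  rw [Finset.sum_diag]
  have h : ∀ p ∈ I, (if σ p then (1:ℝ) else -1) * (if σ p then (1:ℝ) else -1) = 1 := by
    intro p _; by_cases h : σ p = true <;> simp [h]
  rw [Finset.sum_congr rfl h, Finset.sum_const, nsmul_eq_mul, mul_one]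

lemma Icard (n i : ℕ) (hin : i < n) :
    (univ.filter (fun p : Fin n => (p : ℕ) < i)).card = i := by
  have h : univ.filter (fun p : Fin n => (p : ℕ) < i) = Finset.Iio (⟨i, hin⟩ : Fin n) := by
    ext p
    simp [Finset.mem_Iio, Fin.lt_def]
  rw [h, Fin.card_Iio]

lemma sumW_val (n i : ℕ) (hn16 : 16 ≤ n) (hm : 2*(n/2) = n) :
    ∑ σ ∈ (univ.filter (fun σ : Fin n → Bool =>
        (univ.filter (fun p => σ p = true)).card = n/2)),
      ∑ x ∈ (univ.filter (fun p : Fin n => (p : ℕ) < i)).offDiag,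
        (if σ x.1 then (1:ℝ) else -1) * (if σ x.2 then (1:ℝ) else -1)
    = ((univ.filter (fun p : Fin n => (p : ℕ) < i)).offDiag.card : ℝ) *
        (-(n.choose (n/2) : ℝ) / ((n:ℝ)-1)) := by
  rw [Finset.sum_comm]
  have h : ∀ x ∈ (univ.filter (fun p : Fin n => (p : ℕ) < i)).offDiag,
      ∑ σ ∈ (univ.filter (fun σ : Fin n → Bool =>
        (univ.filter (fun p => σ p = true)).card = n/2)),
        (if σ x.1 then (1:ℝ) else -1) * (if σ x.2 then (1:ℝ) else -1)
      = -(n.choose (n/2) : ℝ) / ((n:ℝ)-1) := by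
    intro x hx
    exact pair_val n (n/2) hm hn16 x.1 x.2 (Finset.mem_offDiag.mp hx).2.2
  rw [Finset.sum_congr rfl h, Finset.sum_const, nsmul_eq_mul]

lemma A2_bound (n i : ℕ) (hn16 : 16 ≤ n) (hm : 2*(n/2) = n) (hi : i ≤ n/2) (hi1 : 1 ≤ i) :
    (i:ℝ) * (n.choose (n/2) : ℝ) / 3
    ≤ ∑ σ ∈ (univ.filter (fun σ : Fin n → Bool =>
        (univ.filter (fun p => σ p = true)).card = n/2)),
      (∑ p ∈ univ.filter (fun p : Fin n => (p : ℕ) < i), (if σ p then (1:ℝ) else -1))^2 := by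
  have hin : i < n := by omega
  have hIc := Icard n i hin
  have hdec : ∀ σ : Fin n → Bool,
      (∑ p ∈ univ.filter (fun p : Fin n => (p : ℕ) < i), (if σ p then (1:ℝ) else -1))^2
      = (i:ℝ) + ∑ x ∈ (univ.filter (fun p : Fin n => (p : ℕ) < i)).offDiag,
          (if σ x.1 then (1:ℝ) else -1) * (if σ x.2 then (1:ℝ) else -1) := by
    intro σ
    rw [sq_decomp, hIc]
  rw [Finset.sum_congr rfl (fun σ _ => hdec σ), Finset.sum_add_distrib, Finset.sum_const,
    sumW_val n i hn16 hm, nsmul_eq_mul]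
  have hScard : (univ.filter (fun σ : Fin n → Bool =>
      (univ.filter (fun p => σ p = true)).card = n/2)).card = n.choose (n/2) := by
    have h := count_all_true n (n/2) ∅ (by simp)
    rw [Finset.filter_true_of_mem (by intro σ _; intro u hu; exact absurd hu (Finset.notMem_empty u))] at h
    simpa using h
  rw [hScard]
  have hoffc : ((univ.filter (fun p : Fin n => (p : ℕ) < i)).offDiag.card : ℝ)
      = (i:ℝ)^2 - i := by
    rw [Finset.offDiag_card, hIc]
    push_cast [Nat.cast_sub (Nat.le_mul_of_pos_left i hi1)]
    ring
  rw [hoffc]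
  have hNpos : (0:ℝ) < (n.choose (n/2) : ℝ) := by
    have h0 : 0 < n.choose (n/2) := Nat.choose_pos (Nat.div_le_self n 2)
    exact_mod_cast h0
  set N := (n.choose (n/2) : ℝ) with hN
  have h2m : 2 * ((n/2 : ℕ) : ℝ) = (n:ℝ) := by exact_mod_cast congrArg (Nat.cast : ℕ → ℝ) hm
  have himR : (i:ℝ) ≤ ((n/2 : ℕ) : ℝ) := by exact_mod_cast hi
  have hi1R : (1:ℝ) ≤ (i:ℝ) := by exact_mod_cast hi1
  have hnR : (16:ℝ) ≤ (n:ℝ) := by exact_mod_cast hn16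
  have hn1 : (0:ℝ) < (n:ℝ) - 1 := by linarith
  have ineq : ((i:ℝ)^2 - i) ≤ 2/3 * (i:ℝ) * ((n:ℝ)-1) := by
    nlinarith [mul_nonneg (by linarith : (0:ℝ) ≤ (i:ℝ))
      (by linarith : (0:ℝ) ≤ ((n/2:ℕ):ℝ) - (i:ℝ))]
  have hterm : ((i:ℝ)^2 - i) * (-(N) / ((n:ℝ)-1)) ≥ -(2/3 * (i:ℝ) * N) := by
    rw [ge_iff_le, neg_le]
    have e : -(((i:ℝ)^2 - i) * (-(N)/((n:ℝ)-1))) = ((i:ℝ)^2-i) * N / ((n:ℝ)-1) := by ring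
    rw [e, div_le_iff₀ hn1]
    nlinarith [mul_le_mul_of_nonneg_right ineq hNpos.le]
  linarith [hterm]

lemma Scard (n m : ℕ) :
    (univ.filter (fun σ : Fin n → Bool =>
      (univ.filter (fun p => σ p = true)).card = m)).card = n.choose m := by
  have h := count_all_true n m ∅ (by simp)
  rw [Finset.filter_true_of_mem
    (fun σ _ => fun u hu => absurd hu (Finset.notMem_empty u))] at h
  simpa using h

lemma A4_bound (n i : ℕ) (hn16 : 16 ≤ n) (hm : 2*(n/2) = n) (hi : i ≤ n/2) (hi1 : 1 ≤ i) :
    ∑ σ ∈ (univ.filter (fun σ : Fin n → Bool =>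
        (univ.filter (fun p => σ p = true)).card = n/2)),
      (∑ p ∈ univ.filter (fun p : Fin n => (p : ℕ) < i), (if σ p then (1:ℝ) else -1))^4
    ≤ 4*(i:ℝ)^2*(n.choose (n/2) : ℝ) := by
  have hin : i < n := by omega
  have hIc := Icard n i hin
  have hScard := Scard n (n/2)
  have hNpos : (0:ℝ) < (n.choose (n/2):ℝ) := by
    have h0 : 0 < n.choose (n/2) := Nat.choose_pos (Nat.div_le_self n 2)
    exact_mod_cast h0
  have hnR : (16:ℝ) ≤ (n:ℝ) := by exact_mod_cast hn16
  have h2m : 2 * ((n/2 : ℕ) : ℝ) = (n:ℝ) := by exact_mod_cast congrArg (Nat.cast : ℕ → ℝ) hm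
  have himR : (i:ℝ) ≤ ((n/2 : ℕ) : ℝ) := by exact_mod_cast hi
  have hi1R : (1:ℝ) ≤ (i:ℝ) := by exact_mod_cast hi1
  have hn1 : (0:ℝ) < (n:ℝ)-1 := by linarith
  have hn3 : (0:ℝ) < (n:ℝ)-3 := by linarith
  have hD4nn : (0:ℝ) ≤ 3*(n.choose (n/2):ℝ)/(((n:ℝ)-1)*((n:ℝ)-3)) := by positivity
  have sqe : ∀ (b : Bool), (if b then (1:ℝ) else -1) * (if b then (1:ℝ) else -1) = 1 := by
    intro b; cases b <;> norm_num
  have hdec : ∀ σ : Fin n → Bool,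
      (∑ p ∈ univ.filter (fun p : Fin n => (p : ℕ) < i), (if σ p then (1:ℝ) else -1))^4
      = (i:ℝ)^2 + 2*(i:ℝ)*(∑ x ∈ (univ.filter (fun p : Fin n => (p : ℕ) < i)).offDiag,
            (if σ x.1 then (1:ℝ) else -1) * (if σ x.2 then (1:ℝ) else -1))
        + (∑ x ∈ (univ.filter (fun p : Fin n => (p : ℕ) < i)).offDiag,
            (if σ x.1 then (1:ℝ) else -1) * (if σ x.2 then (1:ℝ) else -1))^2 := by
    intro σ
    rw [show (4:ℕ) = 2*2 from rfl, pow_mul, sq_decomp, hIc]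
    ring
  rw [Finset.sum_congr rfl fun σ _ => hdec σ, Finset.sum_add_distrib, Finset.sum_add_distrib,
    Finset.sum_const, ← Finset.mul_sum, sumW_val n i hn16 hm, nsmul_eq_mul, hScard]
  -- three terms
  have hT2 : 2*(i:ℝ) * (((univ.filter (fun p : Fin n => (p : ℕ) < i)).offDiag.card : ℝ) *
      (-(n.choose (n/2) : ℝ) / ((n:ℝ)-1))) ≤ 0 := by
    apply mul_nonpos_of_nonneg_of_nonpos
    · positivity
    · apply mul_nonpos_of_nonneg_of_nonpos
      · positivity
      · apply div_nonpos_of_nonpos_of_nonneg <;> [linarith; linarith]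
  have hcRle : (((univ.filter (fun p : Fin n => (p : ℕ) < i)).offDiag.card : ℝ)) ≤ (i:ℝ)^2 := by
    rw [Finset.offDiag_card, hIc]
    have : i*i - i ≤ i*i := Nat.sub_le _ _
    calc ((i*i - i : ℕ) : ℝ) ≤ ((i*i : ℕ) : ℝ) := by exact_mod_cast this
      _ = (i:ℝ)^2 := by push_cast; ring
  have hT3 : ∑ σ ∈ (univ.filter (fun σ : Fin n → Bool =>
        (univ.filter (fun p => σ p = true)).card = n/2)),
      (∑ x ∈ (univ.filter (fun p : Fin n => (p : ℕ) < i)).offDiag,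
        (if σ x.1 then (1:ℝ) else -1) * (if σ x.2 then (1:ℝ) else -1))^2
      ≤ 3*(i:ℝ)^2*(n.choose (n/2) : ℝ) := by
    have hexp2 : ∀ σ : Fin n → Bool,
        (∑ x ∈ (univ.filter (fun p : Fin n => (p : ℕ) < i)).offDiag,
          (if σ x.1 then (1:ℝ) else -1) * (if σ x.2 then (1:ℝ) else -1))^2
        = ∑ x ∈ (univ.filter (fun p : Fin n => (p : ℕ) < i)).offDiag,
            ∑ y ∈ (univ.filter (fun p : Fin n => (p : ℕ) < i)).offDiag,
            ((if σ x.1 then (1:ℝ) else -1) * (if σ x.2 then (1:ℝ) else -1)) *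
            ((if σ y.1 then (1:ℝ) else -1) * (if σ y.2 then (1:ℝ) else -1)) := by
      intro σ; rw [sq, Finset.sum_mul_sum]
    rw [Finset.sum_congr rfl fun σ _ => hexp2 σ, Finset.sum_comm]
    have swap2 : ∀ x ∈ (univ.filter (fun p : Fin n => (p : ℕ) < i)).offDiag,
        ∑ σ ∈ (univ.filter (fun σ : Fin n → Bool =>
          (univ.filter (fun p => σ p = true)).card = n/2)),
          ∑ y ∈ (univ.filter (fun p : Fin n => (p : ℕ) < i)).offDiag,
            ((if σ x.1 then (1:ℝ) else -1) * (if σ x.2 then (1:ℝ) else -1)) *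
            ((if σ y.1 then (1:ℝ) else -1) * (if σ y.2 then (1:ℝ) else -1))
        = ∑ y ∈ (univ.filter (fun p : Fin n => (p : ℕ) < i)).offDiag,
            ∑ σ ∈ (univ.filter (fun σ : Fin n → Bool =>
              (univ.filter (fun p => σ p = true)).card = n/2)),
            ((if σ x.1 then (1:ℝ) else -1) * (if σ x.2 then (1:ℝ) else -1)) *
            ((if σ y.1 then (1:ℝ) else -1) * (if σ y.2 then (1:ℝ) else -1)) :=
      fun x _ => Finset.sum_comm
    rw [Finset.sum_congr rfl swap2]
    have hbound : ∀ x ∈ (univ.filter (fun p : Fin n => (p : ℕ) < i)).offDiag,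
        ∀ y ∈ (univ.filter (fun p : Fin n => (p : ℕ) < i)).offDiag,
        ∑ σ ∈ (univ.filter (fun σ : Fin n → Bool =>
            (univ.filter (fun p => σ p = true)).card = n/2)),
          ((if σ x.1 then (1:ℝ) else -1) * (if σ x.2 then (1:ℝ) else -1)) *
          ((if σ y.1 then (1:ℝ) else -1) * (if σ y.2 then (1:ℝ) else -1))
        ≤ (if y = x ∨ y = (x.2, x.1) then (n.choose (n/2) : ℝ) else 0)
          + 3*(n.choose (n/2):ℝ)/(((n:ℝ)-1)*((n:ℝ)-3)) := by
      intro x hx y hy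
      obtain ⟨hx1, hx2, hxne⟩ := Finset.mem_offDiag.mp hx
      obtain ⟨hy1, hy2, hyne⟩ := Finset.mem_offDiag.mp hy
      have hpairneg : ∀ a b : Fin n, a ≠ b →
          ∑ σ ∈ (univ.filter (fun σ : Fin n → Bool =>
            (univ.filter (fun p => σ p = true)).card = n/2)),
            (if σ a then (1:ℝ) else -1) * (if σ b then (1:ℝ) else -1) ≤ 0 := by
        intro a b hab
        rw [pair_val n (n/2) hm hn16 a b hab]
        apply div_nonpos_of_nonpos_of_nonneg <;> [linarith; linarith]
      by_cases h1 : x.1 = y.1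
      · by_cases h2 : x.2 = y.2
        · rw [if_pos (Or.inl (Prod.ext h1.symm h2.symm))]
          have e : ∀ σ : Fin n → Bool,
              ((if σ x.1 then (1:ℝ) else -1) * (if σ x.2 then (1:ℝ) else -1)) *
              ((if σ y.1 then (1:ℝ) else -1) * (if σ y.2 then (1:ℝ) else -1)) = 1 := by
            intro σ
            rw [← h1, ← h2]
            have a := sqe (σ x.1); have b := sqe (σ x.2)
            linear_combination ((if σ x.2 then (1:ℝ) else -1) *
              (if σ x.2 then (1:ℝ) else -1)) * a + b
          rw [Finset.sum_congr rfl fun σ _ => e σ, Finset.sum_const, nsmul_eq_mul,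
            mul_one, hScard]
          linarith [hD4nn]
        · have e : ∀ σ : Fin n → Bool,
              ((if σ x.1 then (1:ℝ) else -1) * (if σ x.2 then (1:ℝ) else -1)) *
              ((if σ y.1 then (1:ℝ) else -1) * (if σ y.2 then (1:ℝ) else -1))
              = (if σ x.2 then (1:ℝ) else -1) * (if σ y.2 then (1:ℝ) else -1) := by
            intro σ
            rw [← h1]
            have a := sqe (σ x.1)
            linear_combination ((if σ x.2 then (1:ℝ) else -1) *
              (if σ y.2 then (1:ℝ) else -1)) * a
          rw [Finset.sum_congr rfl fun σ _ => e σ]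
          have := hpairneg x.2 y.2 h2
          split_ifs <;> linarith [hD4nn, hNpos]
      · by_cases h3 : x.1 = y.2
        · by_cases h4 : x.2 = y.1
          · rw [if_pos (Or.inr (Prod.ext h4.symm h3.symm))]
            have e : ∀ σ : Fin n → Bool,
                ((if σ x.1 then (1:ℝ) else -1) * (if σ x.2 then (1:ℝ) else -1)) *
                ((if σ y.1 then (1:ℝ) else -1) * (if σ y.2 then (1:ℝ) else -1)) = 1 := by
              intro σ
              rw [← h3, ← h4]
              have a := sqe (σ x.1); have b := sqe (σ x.2)
              linear_combination ((if σ x.2 then (1:ℝ) else -1) *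
                (if σ x.2 then (1:ℝ) else -1)) * a + b
            rw [Finset.sum_congr rfl fun σ _ => e σ, Finset.sum_const, nsmul_eq_mul,
              mul_one, hScard]
            linarith [hD4nn]
          · have e : ∀ σ : Fin n → Bool,
                ((if σ x.1 then (1:ℝ) else -1) * (if σ x.2 then (1:ℝ) else -1)) *
                ((if σ y.1 then (1:ℝ) else -1) * (if σ y.2 then (1:ℝ) else -1))
                = (if σ x.2 then (1:ℝ) else -1) * (if σ y.1 then (1:ℝ) else -1) := by
              intro σ
              rw [← h3]
              have a := sqe (σ x.1)
              linear_combination ((if σ x.2 then (1:ℝ) else -1) *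
                (if σ y.1 then (1:ℝ) else -1)) * a
            rw [Finset.sum_congr rfl fun σ _ => e σ]
            have := hpairneg x.2 y.1 h4
            split_ifs <;> linarith [hD4nn, hNpos]
        · by_cases h5 : x.2 = y.1
          · have e : ∀ σ : Fin n → Bool,
                ((if σ x.1 then (1:ℝ) else -1) * (if σ x.2 then (1:ℝ) else -1)) *
                ((if σ y.1 then (1:ℝ) else -1) * (if σ y.2 then (1:ℝ) else -1))
                = (if σ x.1 then (1:ℝ) else -1) * (if σ y.2 then (1:ℝ) else -1) := by
              intro σ
              rw [← h5]
              have b := sqe (σ x.2)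
              linear_combination ((if σ x.1 then (1:ℝ) else -1) *
                (if σ y.2 then (1:ℝ) else -1)) * b
            rw [Finset.sum_congr rfl fun σ _ => e σ]
            have := hpairneg x.1 y.2 h3
            split_ifs <;> linarith [hD4nn, hNpos]
          · by_cases h6 : x.2 = y.2
            · have e : ∀ σ : Fin n → Bool,
                  ((if σ x.1 then (1:ℝ) else -1) * (if σ x.2 then (1:ℝ) else -1)) *
                  ((if σ y.1 then (1:ℝ) else -1) * (if σ y.2 then (1:ℝ) else -1))
                  = (if σ x.1 then (1:ℝ) else -1) * (if σ y.1 then (1:ℝ) else -1) := by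
                intro σ
                rw [← h6]
                have b := sqe (σ x.2)
                linear_combination ((if σ x.1 then (1:ℝ) else -1) *
                  (if σ y.1 then (1:ℝ) else -1)) * b
              rw [Finset.sum_congr rfl fun σ _ => e σ]
              have := hpairneg x.1 y.1 h1
              split_ifs <;> linarith [hD4nn, hNpos]
            · rw [quad_val n (n/2) hm hn16 x.1 x.2 y.1 y.2 hxne h1 h3 h5 h6 hyne]
              split_ifs <;> linarith [hNpos]
    have h3i : 3*(i:ℝ)^2 ≤ ((n:ℝ)-1)*((n:ℝ)-3) := by
      have hsq : (i:ℝ)^2 ≤ ((n/2:ℕ):ℝ)^2 := by nlinarith [himR, hi1R]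
      nlinarith [hsq, mul_nonneg (show (0:ℝ) ≤ ((n/2:ℕ):ℝ) by linarith)
        (show (0:ℝ) ≤ ((n/2:ℕ):ℝ) - 8 by linarith)]
    have hiD : (i:ℝ)^2 * (3*(n.choose (n/2):ℝ)/(((n:ℝ)-1)*((n:ℝ)-3))) ≤ (n.choose (n/2):ℝ) := by
      rw [mul_div_assoc', div_le_iff₀ (by positivity)]
      nlinarith [h3i, hNpos.le, sq_nonneg (i:ℝ)]
    calc ∑ x ∈ (univ.filter (fun p : Fin n => (p : ℕ) < i)).offDiag,
          ∑ y ∈ (univ.filter (fun p : Fin n => (p : ℕ) < i)).offDiag,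
          ∑ σ ∈ (univ.filter (fun σ : Fin n → Bool =>
              (univ.filter (fun p => σ p = true)).card = n/2)),
            ((if σ x.1 then (1:ℝ) else -1) * (if σ x.2 then (1:ℝ) else -1)) *
            ((if σ y.1 then (1:ℝ) else -1) * (if σ y.2 then (1:ℝ) else -1))
        ≤ ∑ x ∈ (univ.filter (fun p : Fin n => (p : ℕ) < i)).offDiag,
            ∑ y ∈ (univ.filter (fun p : Fin n => (p : ℕ) < i)).offDiag,
            ((if y = x ∨ y = (x.2, x.1) then (n.choose (n/2) : ℝ) else 0)
              + 3*(n.choose (n/2):ℝ)/(((n:ℝ)-1)*((n:ℝ)-3))) :=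
          Finset.sum_le_sum fun x hx => Finset.sum_le_sum fun y hy => hbound x hx y hy
      _ ≤ ∑ x ∈ (univ.filter (fun p : Fin n => (p : ℕ) < i)).offDiag,
            (2*(n.choose (n/2):ℝ) + (i:ℝ)^2 * (3*(n.choose (n/2):ℝ)/(((n:ℝ)-1)*((n:ℝ)-3)))) := by
          apply Finset.sum_le_sum
          intro x _
          rw [Finset.sum_add_distrib, Finset.sum_const, nsmul_eq_mul]
          have hy2 : ∑ y ∈ (univ.filter (fun p : Fin n => (p : ℕ) < i)).offDiag,
              (if y = x ∨ y = (x.2, x.1) then (n.choose (n/2) : ℝ) else 0)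
              ≤ 2*(n.choose (n/2):ℝ) := by
            have step : ∀ y ∈ (univ.filter (fun p : Fin n => (p : ℕ) < i)).offDiag,
                (if y = x ∨ y = (x.2, x.1) then (n.choose (n/2) : ℝ) else 0)
                ≤ (if y = x then (n.choose (n/2) : ℝ) else 0)
                  + (if y = (x.2, x.1) then (n.choose (n/2) : ℝ) else 0) := by
              intro y _
              by_cases hA : y = x <;> by_cases hB : y = (x.2, x.1) <;>
                simp [hA, hB] <;> split_ifs <;> linarith [hNpos]
            calc ∑ y ∈ (univ.filter (fun p : Fin n => (p : ℕ) < i)).offDiag,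
                  (if y = x ∨ y = (x.2, x.1) then (n.choose (n/2) : ℝ) else 0)
                ≤ ∑ y ∈ (univ.filter (fun p : Fin n => (p : ℕ) < i)).offDiag,
                  ((if y = x then (n.choose (n/2) : ℝ) else 0)
                    + (if y = (x.2, x.1) then (n.choose (n/2) : ℝ) else 0)) :=
                  Finset.sum_le_sum step
              _ = (∑ y ∈ (univ.filter (fun p : Fin n => (p : ℕ) < i)).offDiag,
                    (if y = x then (n.choose (n/2) : ℝ) else 0))
                  + ∑ y ∈ (univ.filter (fun p : Fin n => (p : ℕ) < i)).offDiag,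
                    (if y = (x.2, x.1) then (n.choose (n/2) : ℝ) else 0) :=
                  Finset.sum_add_distrib
              _ ≤ 2*(n.choose (n/2):ℝ) := by
                  rw [Finset.sum_ite_eq', Finset.sum_ite_eq']
                  split_ifs <;> linarith [hNpos]
          have hc4 : (((univ.filter (fun p : Fin n => (p : ℕ) < i)).offDiag.card : ℝ)) *
              (3*(n.choose (n/2):ℝ)/(((n:ℝ)-1)*((n:ℝ)-3)))
              ≤ (i:ℝ)^2 * (3*(n.choose (n/2):ℝ)/(((n:ℝ)-1)*((n:ℝ)-3))) :=
            mul_le_mul_of_nonneg_right hcRle hD4nn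
          linarith
      _ = (((univ.filter (fun p : Fin n => (p : ℕ) < i)).offDiag.card : ℝ)) *
            (2*(n.choose (n/2):ℝ) + (i:ℝ)^2 * (3*(n.choose (n/2):ℝ)/(((n:ℝ)-1)*((n:ℝ)-3)))) := by
          rw [Finset.sum_const, nsmul_eq_mul]
      _ ≤ (i:ℝ)^2 * (2*(n.choose (n/2):ℝ) + (i:ℝ)^2 * (3*(n.choose (n/2):ℝ)/(((n:ℝ)-1)*((n:ℝ)-3)))) := by
          apply mul_le_mul_of_nonneg_right hcRle
          have : (0:ℝ) ≤ (i:ℝ)^2 * (3*(n.choose (n/2):ℝ)/(((n:ℝ)-1)*((n:ℝ)-3))) :=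
            mul_nonneg (sq_nonneg _) hD4nn
          linarith [hNpos]
      _ ≤ 3*(i:ℝ)^2*(n.choose (n/2) : ℝ) := by
          have h := mul_le_mul_of_nonneg_left hiD (sq_nonneg (i:ℝ))
          nlinarith [h, sq_nonneg (i:ℝ), hNpos.le]
  nlinarith [hT2, hT3, sq_nonneg (i:ℝ), hNpos.le]

/-- n ≥ 256 multiple of 4, i ≤ n/2: E[|∑_{p=1}^i σ_p|] ≥ √i / 32. -/
theorem stmt_1 (n : ℕ) (hn : 4 ∣ n) (hn256 : 256 ≤ n) (i : ℕ) (hi : i ≤ n / 2) :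
    let S : Finset (Fin n → Bool) :=
      univ.filter (fun σ => (univ.filter (fun p => σ p = true)).card = n / 2)
    (∑ σ ∈ S, |∑ p ∈ univ.filter (fun p : Fin n => (p : ℕ) < i),
        (if σ p then (1 : ℝ) else -1)|) / (S.card : ℝ) ≥ Real.sqrt i / 32 := by
  intro S
  have hm : 2 * (n / 2) = n := by omega
  have hn16 : 16 ≤ n := by omega
  have hScard : S.card = n.choose (n/2) := Scard n (n/2)
  have hNpos : (0:ℝ) < (n.choose (n/2):ℝ) := by
    have h0 : 0 < n.choose (n/2) := Nat.choose_pos (Nat.div_le_self n 2)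
    exact_mod_cast h0
  rcases Nat.eq_zero_or_pos i with hi0 | hi1
  · subst hi0
    rw [Nat.cast_zero, Real.sqrt_zero, zero_div, ge_iff_le]
    apply div_nonneg
    · exact Finset.sum_nonneg fun σ _ => abs_nonneg _
    · positivity
  · have h2 := A2_bound n i hn16 hm hi hi1
    have h4 := A4_bound n i hn16 hm hi hi1
    have hcard : ((S.card : ℕ) : ℝ) = (n.choose (n/2) : ℝ) := by exact_mod_cast hScard
    have hkey := key_numeric S (fun σ => ∑ p ∈ univ.filter (fun p : Fin n => (p : ℕ) < i),
        (if σ p then (1:ℝ) else -1)) (n.choose (n/2) : ℝ) (i:ℝ) hNpos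
        (by exact_mod_cast hi1) hcard h2 h4
    rw [ge_iff_le] at hkey ⊢
    rw [hcard]
    exact hkey
end

section
/- Let (σ_1,…,σ_n) be a uniformly random permutation of the multiset with n/2 copies of +1 and n/2 copies of −1, where n ≥ 256 is a multiple of 4. Then for any i with n/4 ≤ i ≤ n/2, both P(∑_{p=1}^i σ_p < 0) ≥ 1/4 and P(∑_{p=1}^i σ_p > 0) ≥ 1/4. -/
open Finset

lemma card_lt (n j : ℕ) (h : j ≤ n) :
    ((univ : Finset (Fin n)).filter (fun p : Fin n => (p : ℕ) < j)).card = j := by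
  have := Finset.card_bij (s := (univ : Finset (Fin n)).filter (fun p : Fin n => (p : ℕ) < j))
      (t := Finset.range j) (fun p _ => (p : ℕ))
      (by intro a ha; simp at ha ⊢; exact ha)
      (by intro a _ b _ hab; exact Fin.val_injective hab)
      (by intro b hb
          simp only [Finset.mem_range] at hb
          exact ⟨⟨b, lt_of_lt_of_le hb h⟩, by simp [hb], rfl⟩)
  simpa using this
open Finset

lemma ratio_lemma (n i k M : ℕ) (h2 : i = 2 * k) (hM : M = n / 2 - k)
    (hk32 : 32 ≤ k) (hM64 : 64 ≤ M) (hkM : k ≤ M) (hin : i ≤ n / 2)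
    (hnn : 2 * (n / 2) = n) :
    i.choose k * (n - i).choose M
      ≤ i.choose (k - 1) * (n - i).choose (M + 1)
        + i.choose (k + 1) * (n - i).choose (M - 1) := by
  have e1 : i.choose (k + 1) * (k + 1) = i.choose k * k := by
    have h := Nat.choose_succ_right_eq i k
    rwa [show i - k = k by omega] at h
  have e2 : (n - i).choose M * M = (n - i).choose (M - 1) * (M + 1) := by
    have h := Nat.choose_succ_right_eq (n - i) (M - 1)
    rwa [show M - 1 + 1 = M by omega, show n - i - (M - 1) = M + 1 by omega] at h
  have e3 : i.choose k * k = i.choose (k - 1) * (k + 1) := by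
    have h := Nat.choose_succ_right_eq i (k - 1)
    rwa [show k - 1 + 1 = k by omega, show i - (k - 1) = k + 1 by omega] at h
  have e4 : (n - i).choose (M + 1) * (M + 1) = (n - i).choose M * M := by
    have h := Nat.choose_succ_right_eq (n - i) M
    rwa [show n - i - M = M by omega] at h
  have p1 : i.choose (k + 1) * (n - i).choose (M - 1) * ((k + 1) * (M + 1))
      = i.choose k * (n - i).choose M * (k * M) := by
    calc i.choose (k + 1) * (n - i).choose (M - 1) * ((k + 1) * (M + 1))
        = (i.choose (k + 1) * (k + 1)) * ((n - i).choose (M - 1) * (M + 1)) := by ring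
      _ = (i.choose k * k) * ((n - i).choose M * M) := by rw [e1, ← e2]
      _ = i.choose k * (n - i).choose M * (k * M) := by ring
  have p2 : i.choose (k - 1) * (n - i).choose (M + 1) * ((k + 1) * (M + 1))
      = i.choose k * (n - i).choose M * (k * M) := by
    calc i.choose (k - 1) * (n - i).choose (M + 1) * ((k + 1) * (M + 1))
        = (i.choose (k - 1) * (k + 1)) * ((n - i).choose (M + 1) * (M + 1)) := by ring
      _ = (i.choose k * k) * ((n - i).choose M * M) := by rw [← e3, e4]
      _ = i.choose k * (n - i).choose M * (k * M) := by ring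
  have hc : (k + 1) * (M + 1) ≤ 2 * (k * M) := by
    have h3 : 3 * M ≤ k * M := Nat.mul_le_mul_right M (by omega)
    calc (k + 1) * (M + 1) = k * M + (k + M + 1) := by ring
      _ ≤ k * M + 3 * M := by omega
      _ ≤ k * M + k * M := by omega
      _ = 2 * (k * M) := by ring
  set c := (k + 1) * (M + 1) with hcdef
  have key : i.choose k * (n - i).choose M * c
      ≤ (i.choose (k - 1) * (n - i).choose (M + 1)
          + i.choose (k + 1) * (n - i).choose (M - 1)) * c := by
    rw [Nat.add_mul, p1, p2, hcdef]
    calc i.choose k * (n - i).choose M * ((k + 1) * (M + 1))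
        ≤ i.choose k * (n - i).choose M * (2 * (k * M)) :=
          Nat.mul_le_mul_left _ hc
      _ = i.choose k * (n - i).choose M * (k * M) + i.choose k * (n - i).choose M * (k * M) := by ring
  exact Nat.le_of_mul_le_mul_right key (by positivity)

lemma sum_pm (n i : ℕ) (σ : Fin n → Bool) :
    ∑ p ∈ (univ : Finset (Fin n)).filter (fun p : Fin n => (p : ℕ) < i),
        (if σ p then (1 : ℤ) else -1)
      = 2 * ((((univ : Finset (Fin n)).filter (fun p : Fin n => (p : ℕ) < i)).filter
            (fun p => σ p = true)).card : ℤ)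
        - (((univ : Finset (Fin n)).filter (fun p : Fin n => (p : ℕ) < i)).card : ℤ) := by
  set I := (univ : Finset (Fin n)).filter (fun p : Fin n => (p : ℕ) < i) with hI
  have h : ∀ p ∈ I, (if σ p then (1 : ℤ) else -1)
      = 2 * (if σ p = true then (1 : ℤ) else 0) - 1 := by
    intro p _; by_cases h : σ p <;> simp [h]
  rw [Finset.sum_congr rfl h, Finset.sum_sub_distrib, ← Finset.mul_sum, Finset.sum_boole,
    Finset.sum_const]
  simp [mul_comm]
open Finset

lemma count_T (n i k : ℕ) (hi : i ≤ n) (hki : k ≤ i) (hk2 : k ≤ n / 2)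
    (hk3 : n / 2 - k ≤ n - i) :
    ((univ : Finset (Fin n → Bool)).filter (fun σ =>
        (univ.filter (fun p => σ p = true)).card = n / 2 ∧
        (((univ : Finset (Fin n)).filter (fun p : Fin n => (p : ℕ) < i)).filter
          (fun p => σ p = true)).card = k)).card
      = i.choose k * (n - i).choose (n / 2 - k) := by
  classical
  set I : Finset (Fin n) := (univ : Finset (Fin n)).filter (fun p : Fin n => (p : ℕ) < i) with hI
  have hIcard : I.card = i := by
    have := Finset.card_bij (s := I) (t := Finset.range i) (fun p _ => (p : ℕ))
      (by intro a ha; simp [hI] at ha ⊢; exact ha)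
      (by intro a _ b _ hab; exact Fin.val_injective hab)
      (by intro b hb
          simp only [Finset.mem_range] at hb
          exact ⟨⟨b, lt_of_lt_of_le hb hi⟩, by simp [hI, hb], rfl⟩)
    simpa using this
  have hIccard : Iᶜ.card = n - i := by
    rw [Finset.card_compl, hIcard]; simp
  -- key splitting fact
  have hsplit : ∀ σ : Fin n → Bool,
      (univ.filter (fun p => σ p = true)).card
        = (I.filter (fun p => σ p = true)).card + (Iᶜ.filter (fun p => σ p = true)).card := by
    intro σ
    rw [← Finset.card_union_of_disjoint, ← Finset.filter_union, Finset.union_compl]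
    exact Finset.disjoint_filter_filter (disjoint_compl_right)
  have hb : ((univ : Finset (Fin n → Bool)).filter (fun σ =>
        (univ.filter (fun p => σ p = true)).card = n / 2 ∧
        (I.filter (fun p => σ p = true)).card = k)).card
      = (I.powersetCard k ×ˢ Iᶜ.powersetCard (n / 2 - k)).card := by
    apply Finset.card_nbij'
      (fun σ => (I.filter (fun p => σ p = true), Iᶜ.filter (fun p => σ p = true)))
      (fun AB => fun p => decide (p ∈ AB.1 ∪ AB.2))
    · intro σ hσ
      simp only [Finset.mem_coe, Finset.mem_filter, Finset.mem_univ, true_and] at hσ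
      obtain ⟨h1, h2⟩ := hσ
      simp only [Finset.mem_coe, Finset.mem_product, Finset.mem_powersetCard]
      refine ⟨⟨Finset.filter_subset _ _, h2⟩, ⟨Finset.filter_subset _ _, ?_⟩⟩
      have := hsplit σ
      omega
    · intro AB hAB
      simp only [Finset.mem_coe, Finset.mem_product, Finset.mem_powersetCard] at hAB
      obtain ⟨⟨hA1, hA2⟩, hB1, hB2⟩ := hAB
      have hfil : (univ.filter (fun p => (decide (p ∈ AB.1 ∪ AB.2)) = true)) = AB.1 ∪ AB.2 := by
        ext p; simp
      have hdisj : Disjoint AB.1 AB.2 :=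
        Finset.disjoint_of_subset_left hA1 (Finset.disjoint_of_subset_right hB1 disjoint_compl_right)
      have hAfil : (I.filter (fun p => (decide (p ∈ AB.1 ∪ AB.2)) = true)) = AB.1 := by
        ext p
        simp only [Finset.mem_filter, decide_eq_true_eq, Finset.mem_union]
        constructor
        · rintro ⟨hpI, hp | hp⟩
          · exact hp
          · exact absurd (hB1 hp) (by simp [hpI])
        · intro hp; exact ⟨hA1 hp, Or.inl hp⟩
      simp only [Finset.mem_coe, Finset.mem_filter, Finset.mem_univ, true_and]
      refine ⟨?_, by rw [hAfil, hA2]⟩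
      rw [hfil, Finset.card_union_of_disjoint hdisj, hA2, hB2]
      omega
    · intro σ hσ
      funext p
      by_cases hp : σ p = true <;> simp [hp]
    · intro AB hAB
      simp only [Finset.mem_coe, Finset.mem_product, Finset.mem_powersetCard] at hAB
      obtain ⟨⟨hA1, hA2⟩, hB1, hB2⟩ := hAB
      have hAfil : (I.filter (fun p => (decide (p ∈ AB.1 ∪ AB.2)) = true)) = AB.1 := by
        ext p
        simp only [Finset.mem_filter, decide_eq_true_eq, Finset.mem_union]
        constructor
        · rintro ⟨hpI, hp | hp⟩
          · exact hp
          · exact absurd (hB1 hp) (by simp [hpI])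
        · intro hp; exact ⟨hA1 hp, Or.inl hp⟩
      have hBfil : (Iᶜ.filter (fun p => (decide (p ∈ AB.1 ∪ AB.2)) = true)) = AB.2 := by
        ext p
        simp only [Finset.mem_filter, decide_eq_true_eq, Finset.mem_union]
        constructor
        · rintro ⟨hpI, hp | hp⟩
          · exact absurd (hA1 hp) (by simpa using hpI)
          · exact hp
        · intro hp; exact ⟨hB1 hp, Or.inr hp⟩
      exact Prod.ext hAfil hBfil
  rw [hb, Finset.card_product, Finset.card_powersetCard, Finset.card_powersetCard, hIcard, hIccard]
/-- for n/4 ≤ i ≤ n/2, P(s_i < 0) ≥ 1/4 and P(s_i > 0) ≥ 1/4. -/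
theorem stmt_3 (n : ℕ) (hn : 4 ∣ n) (hn256 : 256 ≤ n) (i : ℕ)
    (hi1 : n / 4 ≤ i) (hi2 : i ≤ n / 2) :
    let S : Finset (Fin n → Bool) :=
      univ.filter (fun σ => (univ.filter (fun p => σ p = true)).card = n / 2)
    let s : (Fin n → Bool) → ℤ := fun σ =>
      ∑ p ∈ univ.filter (fun p : Fin n => (p : ℕ) < i), (if σ p then (1 : ℤ) else -1)
    ((S.filter (fun σ => s σ < 0)).card : ℝ) / (S.card : ℝ) ≥ 1 / 4 ∧
    ((S.filter (fun σ => 0 < s σ)).card : ℝ) / (S.card : ℝ) ≥ 1 / 4 := by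
  intro S s
  classical
  have hn2 : 2 * (n / 2) = n := by omega
  have hin : i ≤ n := by omega
  have hIcard : ((univ : Finset (Fin n)).filter (fun p : Fin n => (p : ℕ) < i)).card = i :=
    card_lt n i hin
  have memS : ∀ σ : Fin n → Bool,
      σ ∈ S ↔ (univ.filter (fun p => σ p = true)).card = n / 2 := by
    intro σ
    show σ ∈ univ.filter _ ↔ _
    simp [Finset.mem_filter]
  have hs : ∀ σ : Fin n → Bool,
      s σ = 2 * ((((univ : Finset (Fin n)).filter (fun p : Fin n => (p : ℕ) < i)).filter
        (fun p => σ p = true)).card : ℤ) - (i : ℤ) := by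
    intro σ
    have h := sum_pm n i σ
    rw [hIcard] at h
    exact h
  -- flip symmetry
  have hsneg : ∀ σ : Fin n → Bool, s (fun p => !σ p) = - s σ := by
    intro σ
    show (∑ p ∈ _, if !σ p then (1 : ℤ) else -1) = -(∑ p ∈ _, if σ p then (1 : ℤ) else -1)
    rw [← Finset.sum_neg_distrib]
    apply Finset.sum_congr rfl
    intro p _
    by_cases h : σ p <;> simp [h]
  have hflipS : ∀ σ : Fin n → Bool, σ ∈ S → (fun p => !σ p) ∈ S := by
    intro σ hσ
    rw [memS] at hσ ⊢
    have hsplit := Finset.card_filter_add_card_filter_not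
      (s := (univ : Finset (Fin n))) (p := fun p => σ p = true)
    have hcu : (univ : Finset (Fin n)).card = n := by simp
    have heq : (univ : Finset (Fin n)).filter (fun p => (!σ p) = true)
        = (univ : Finset (Fin n)).filter (fun p => ¬ (σ p = true)) := by
      apply Finset.filter_congr
      intro p _
      simp
    rw [heq]
    omega
  have hflip : (S.filter (fun σ => s σ < 0)).card = (S.filter (fun σ => 0 < s σ)).card := by
    apply Finset.card_nbij' (fun σ => fun p => !σ p) (fun σ => fun p => !σ p)
    · intro σ hσ
      rw [Finset.mem_coe, Finset.mem_filter] at hσ ⊢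
      refine ⟨hflipS σ hσ.1, ?_⟩
      rw [hsneg]
      omega
    · intro σ hσ
      rw [Finset.mem_coe, Finset.mem_filter] at hσ ⊢
      refine ⟨hflipS σ hσ.1, ?_⟩
      rw [hsneg]
      omega
    · intro σ _; funext p; simp
    · intro σ _; funext p; simp
  -- partition of S
  have hpart : (S.filter (fun σ => s σ < 0)).card + ((S.filter (fun σ => ¬ s σ < 0)).card) = S.card :=
    Finset.card_filter_add_card_filter_not (p := fun σ => s σ < 0)
  have hpart2 : ((S.filter (fun σ => ¬ s σ < 0)).filter (fun σ => s σ = 0)).card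
      + ((S.filter (fun σ => ¬ s σ < 0)).filter (fun σ => ¬ s σ = 0)).card
      = (S.filter (fun σ => ¬ s σ < 0)).card :=
    Finset.card_filter_add_card_filter_not (p := fun σ => s σ = 0)
  have he1 : (S.filter (fun σ => ¬ s σ < 0)).filter (fun σ => s σ = 0)
      = S.filter (fun σ => s σ = 0) := by
    rw [Finset.filter_filter]
    apply Finset.filter_congr
    intro σ _
    constructor
    · rintro ⟨_, h⟩; exact h
    · intro h; exact ⟨by omega, h⟩
  have he2 : (S.filter (fun σ => ¬ s σ < 0)).filter (fun σ => ¬ s σ = 0)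
      = S.filter (fun σ => 0 < s σ) := by
    rw [Finset.filter_filter]
    apply Finset.filter_congr
    intro σ _
    constructor
    · rintro ⟨h1, h2⟩; omega
    · intro h; exact ⟨by omega, by omega⟩
  rw [he1, he2] at hpart2
  -- S is nonempty
  have hSpos : 0 < S.card := by
    rw [Finset.card_pos]
    refine ⟨fun p => decide ((p : ℕ) < n / 2), ?_⟩
    rw [memS]
    have heq : (univ : Finset (Fin n)).filter (fun p : Fin n => (decide ((p : ℕ) < n / 2)) = true)
        = (univ : Finset (Fin n)).filter (fun p : Fin n => (p : ℕ) < n / 2) := by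
      apply Finset.filter_congr
      intro p _
      simp
    rw [heq]
    exact card_lt n (n / 2) (by omega)
  -- the middle bound : 2 * card(s = 0) ≤ S.card
  have hmid : 2 * (S.filter (fun σ => s σ = 0)).card ≤ S.card := by
    rcases Nat.even_or_odd i with ⟨k0, hk0⟩ | ⟨k, hk⟩
    · -- i even, i = k0 + k0 with k0 = km + 1
      obtain ⟨km, rfl⟩ : ∃ km, k0 = km + 1 := ⟨k0 - 1, by omega⟩
      have hk32 : 32 ≤ km + 1 := by omega
      have hbnd1 : km ≤ i := by omega
      have hbnd2 : km ≤ n / 2 := by omega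
      have hbnd3 : km + 1 ≤ i := by omega
      have hbnd4 : km + 1 ≤ n / 2 := by omega
      have hbnd5 : km + 2 ≤ i := by omega
      have hbnd6 : km + 2 ≤ n / 2 := by omega
      have hE : ∀ j : ℕ, j ≤ n / 2 → S.filter (fun σ =>
          (((univ : Finset (Fin n)).filter (fun p : Fin n => (p : ℕ) < i)).filter
            (fun p => σ p = true)).card = j)
          = (univ : Finset (Fin n → Bool)).filter (fun σ =>
            (univ.filter (fun p => σ p = true)).card = n / 2 ∧
            (((univ : Finset (Fin n)).filter (fun p : Fin n => (p : ℕ) < i)).filter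
              (fun p => σ p = true)).card = j) := by
        intro j _
        ext σ
        rw [Finset.mem_filter, memS, Finset.mem_filter]
        simp
      have hcard : ∀ j : ℕ, j ≤ i → j ≤ n / 2 → (S.filter (fun σ =>
          (((univ : Finset (Fin n)).filter (fun p : Fin n => (p : ℕ) < i)).filter
            (fun p => σ p = true)).card = j)).card
          = i.choose j * (n - i).choose (n / 2 - j) := by
        intro j hj1 hj2
        rw [hE j hj2]
        exact count_T n i j hin hj1 hj2 (by omega)
      have hbeq : S.filter (fun σ => s σ = 0) = S.filter (fun σ =>
          (((univ : Finset (Fin n)).filter (fun p : Fin n => (p : ℕ) < i)).filter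
            (fun p => σ p = true)).card = km + 1) := by
        apply Finset.filter_congr
        intro σ _
        rw [hs σ]
        constructor <;> intro h <;> omega
      -- disjointness and union bound
      have hd1 : Disjoint (S.filter (fun σ =>
          (((univ : Finset (Fin n)).filter (fun p : Fin n => (p : ℕ) < i)).filter
            (fun p => σ p = true)).card = km))
          (S.filter (fun σ =>
          (((univ : Finset (Fin n)).filter (fun p : Fin n => (p : ℕ) < i)).filter
            (fun p => σ p = true)).card = km + 1)) := by
        rw [Finset.disjoint_left]
        intro σ h1 h2
        rw [Finset.mem_filter] at h1 h2
        have h1' := h1.2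
        have h2' := h2.2
        omega
      have hd2 : Disjoint ((S.filter (fun σ =>
          (((univ : Finset (Fin n)).filter (fun p : Fin n => (p : ℕ) < i)).filter
            (fun p => σ p = true)).card = km)) ∪ (S.filter (fun σ =>
          (((univ : Finset (Fin n)).filter (fun p : Fin n => (p : ℕ) < i)).filter
            (fun p => σ p = true)).card = km + 1)))
          (S.filter (fun σ =>
          (((univ : Finset (Fin n)).filter (fun p : Fin n => (p : ℕ) < i)).filter
            (fun p => σ p = true)).card = km + 2)) := by
        rw [Finset.disjoint_left]
        intro σ h1 h2
        simp only [Finset.mem_union, Finset.mem_filter] at h1 h2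
        have h2' := h2.2
        rcases h1 with ⟨_, h1'⟩ | ⟨_, h1'⟩ <;> omega
      have hunion : (S.filter (fun σ =>
          (((univ : Finset (Fin n)).filter (fun p : Fin n => (p : ℕ) < i)).filter
            (fun p => σ p = true)).card = km)).card
          + (S.filter (fun σ =>
          (((univ : Finset (Fin n)).filter (fun p : Fin n => (p : ℕ) < i)).filter
            (fun p => σ p = true)).card = km + 1)).card
          + (S.filter (fun σ =>
          (((univ : Finset (Fin n)).filter (fun p : Fin n => (p : ℕ) < i)).filter
            (fun p => σ p = true)).card = km + 2)).card ≤ S.card := by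
        rw [← Finset.card_union_of_disjoint hd1, ← Finset.card_union_of_disjoint hd2]
        apply Finset.card_le_card
        intro σ hσ
        rw [Finset.mem_union, Finset.mem_union] at hσ
        rcases hσ with (h | h) | h <;> exact Finset.mem_of_mem_filter σ h
      have hc1 := hcard km hbnd1 hbnd2
      have hc2 := hcard (km + 1) hbnd3 hbnd4
      have hc3 := hcard (km + 2) hbnd5 hbnd6
      rw [hc1, hc2, hc3] at hunion
      rw [hbeq, hc2]
      clear hc1 hc2 hc3
      have hNle : i.choose (km + 1) * (n - i).choose (n / 2 - (km + 1))
          ≤ i.choose km * (n - i).choose (n / 2 - km)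
            + i.choose (km + 2) * (n - i).choose (n / 2 - (km + 2)) := by
        have hr := ratio_lemma n i (km + 1) (n / 2 - (km + 1)) (by omega) rfl (by omega)
          (by omega) (by omega) hi2 hn2
        rw [show km + 1 - 1 = km from rfl, show km + 1 + 1 = km + 2 from rfl,
          show n / 2 - (km + 1) + 1 = n / 2 - km by omega,
          show n / 2 - (km + 1) - 1 = n / 2 - (km + 2) by omega] at hr
        exact hr
      omega
    · -- i odd : s σ = 0 impossible
      have : S.filter (fun σ => s σ = 0) = ∅ := by
        rw [Finset.filter_eq_empty_iff]
        intro σ _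
        rw [hs σ]
        omega
      rw [this]
      simp
  -- final numeric step
  have h4 : S.card ≤ 4 * (S.filter (fun σ => s σ < 0)).card := by omega
  have h4' : S.card ≤ 4 * (S.filter (fun σ => 0 < s σ)).card := by omega
  have hSR : (0 : ℝ) < (S.card : ℝ) := by exact_mod_cast hSpos
  constructor
  · rw [ge_iff_le, le_div_iff₀ hSR]
    have : (S.card : ℝ) ≤ 4 * ((S.filter (fun σ => s σ < 0)).card : ℝ) := by exact_mod_cast h4
    linarith
  · rw [ge_iff_le, le_div_iff₀ hSR]
    have : (S.card : ℝ) ≤ 4 * ((S.filter (fun σ => 0 < s σ)).card : ℝ) := by exact_mod_cast h4'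
    linarith
end

section
/- Suppose x, g ∈ ℝ^d, x* ∈ ℝ^d, F: ℝ^d → ℝ is μ-strongly convex with L-Lipschitz gradient (L ≥ μ > 0), n ∈ ℕ, α > 0, and R ∈ ℝ^d. If x⁺ = x − α(n·∇F(x) + R), then ‖x⁺ − x*‖² ≤ (1 − nαμ)·‖x − x*‖² − nα(1/L − 2nα)·‖∇F(x)‖² + 2α²‖R‖² − 2α⟨x − x*, R⟩, where x* is the minimizer of F (so ∇F(x*) = 0). -/
open RealInnerProductSpace

private lemma grad_cont {d : ℕ} (F : EuclideanSpace ℝ (Fin d) → ℝ) (L : ℝ) (hL : 0 ≤ L)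
    (hlip : ∀ x y, ‖gradient F x - gradient F y‖ ≤ L * ‖x - y‖) :
    Continuous (gradient F) := by
  refine LipschitzWith.continuous (K := L.toNNReal) (LipschitzWith.of_dist_le_mul fun x y => ?_)
  rw [dist_eq_norm, dist_eq_norm, Real.coe_toNNReal _ hL]
  exact hlip x y

private lemma descent {d : ℕ} (F : EuclideanSpace ℝ (Fin d) → ℝ) (hdiff : Differentiable ℝ F)
    (L : ℝ) (hL : 0 ≤ L)
    (hlip : ∀ x y, ‖gradient F x - gradient F y‖ ≤ L * ‖x - y‖) (x y : EuclideanSpace ℝ (Fin d)) :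
    F y ≤ F x + ⟪gradient F x, y - x⟫ + L / 2 * ‖y - x‖ ^ 2 := by
  set v := y - x with hv
  have hder : ∀ t : ℝ, HasDerivAt (fun t : ℝ => F (x + t • v))
      ⟪gradient F (x + t • v), v⟫ t := by
    intro t
    have hc : HasDerivAt (fun t : ℝ => x + t • v) v t := by
      simpa using ((hasDerivAt_id t).smul_const v).const_add x
    have := ((hdiff (x + t • v)).hasGradientAt.hasFDerivAt).comp_hasDerivAt t hc
    simpa [InnerProductSpace.toDual_apply_apply, Function.comp_def] using this
  have hcont : Continuous fun t : ℝ => ⟪gradient F (x + t • v), v⟫ :=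
    (Continuous.inner ((grad_cont F L hL hlip).comp (by continuity)) continuous_const)
  have hint : IntervalIntegrable (fun t : ℝ => ⟪gradient F (x + t • v), v⟫)
      MeasureTheory.volume 0 1 := hcont.intervalIntegrable 0 1
  have hftc : ∫ t in (0:ℝ)..1, ⟪gradient F (x + t • v), v⟫ = F y - F x := by
    have := intervalIntegral.integral_eq_sub_of_hasDerivAt (fun t _ => hder t) hint
    simpa [hv] using this
  have hbound : ∫ t in (0:ℝ)..1, ⟪gradient F (x + t • v), v⟫
      ≤ ∫ t in (0:ℝ)..1, (⟪gradient F x, v⟫ + L * t * ‖v‖ ^ 2) := by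
    refine intervalIntegral.integral_mono_on (by norm_num) hint ?_ ?_
    · exact ((continuous_const.add ((continuous_const.mul continuous_id).mul
        continuous_const))).intervalIntegrable 0 1
    · intro t ht
      have h1 : ⟪gradient F (x + t • v) - gradient F x, v⟫
          ≤ ‖gradient F (x + t • v) - gradient F x‖ * ‖v‖ := real_inner_le_norm _ _
      have h2 : ‖gradient F (x + t • v) - gradient F x‖ ≤ L * (t * ‖v‖) := by
        have := hlip (x + t • v) x
        simpa [norm_smul, abs_of_nonneg ht.1] using this
      have h3 : ‖gradient F (x + t • v) - gradient F x‖ * ‖v‖ ≤ L * (t * ‖v‖) * ‖v‖ :=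
        mul_le_mul_of_nonneg_right h2 (norm_nonneg _)
      have h4 : ⟪gradient F (x + t • v) - gradient F x, v⟫
          = ⟪gradient F (x + t • v), v⟫ - ⟪gradient F x, v⟫ := inner_sub_left _ _ _
      nlinarith [h1, h3, h4]
  have hval : ∫ t in (0:ℝ)..1, (⟪gradient F x, v⟫ + L * t * ‖v‖ ^ 2)
      = ⟪gradient F x, v⟫ + L / 2 * ‖v‖ ^ 2 := by
    have : ∀ t : ℝ, ⟪gradient F x, v⟫ + L * t * ‖v‖ ^ 2
        = ⟪gradient F x, v⟫ + (L * ‖v‖ ^ 2) * t := fun t => by ring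
    simp only [this]
    rw [intervalIntegral.integral_add (intervalIntegrable_const)
      ((continuous_mul_left (L * ‖v‖ ^ 2)).intervalIntegrable 0 1),
      intervalIntegral.integral_const_mul, integral_id, intervalIntegral.integral_const]
    simp
    ring
  rw [hftc, hval] at hbound
  linarith [hbound]

set_option maxHeartbeats 1000000 in
/-- one-epoch expansion inequality. -/
theorem stmt_12 (d : ℕ) (μ L : ℝ) (hμ : 0 < μ) (hμL : μ ≤ L)
    (F : EuclideanSpace ℝ (Fin d) → ℝ) (hdiff : Differentiable ℝ F)
    (hsc : ∀ x y, F y ≥ F x + ⟪gradient F x, y - x⟫ + μ / 2 * ‖y - x‖ ^ 2)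
    (hlip : ∀ x y, ‖gradient F x - gradient F y‖ ≤ L * ‖x - y‖)
    (n : ℕ) (α : ℝ) (hα : 0 < α)
    (x xp xs R : EuclideanSpace ℝ (Fin d))
    (hmin : gradient F xs = 0)
    (hxp : xp = x - α • ((n : ℝ) • gradient F x + R)) :
    ‖xp - xs‖ ^ 2 ≤ (1 - n * α * μ) * ‖x - xs‖ ^ 2
      - n * α * (1 / L - 2 * n * α) * ‖gradient F x‖ ^ 2
      + 2 * α ^ 2 * ‖R‖ ^ 2 - 2 * α * ⟪x - xs, R⟫ := by
  have hL : 0 < L := lt_of_lt_of_le hμ hμL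
  set g := gradient F x with hg
  -- xs is a global minimizer
  have hmin' : ∀ y, F xs ≤ F y := by
    intro y
    have := hsc xs y
    rw [hmin] at this
    simp at this
    nlinarith [sq_nonneg ‖y - xs‖, norm_nonneg (y - xs)]
  -- function value gap lower bound via descent lemma
  have hgap : 1 / (2 * L) * ‖g‖ ^ 2 ≤ F x - F xs := by
    have hd := descent F hdiff L hL.le hlip x (x - (1 / L) • g)
    have hsub : (x - (1/L) • g) - x = -((1/L) • g) := by abel
    rw [hsub] at hd
    have hin : ⟪g, -((1/L) • g)⟫ = -(1/L) * ‖g‖ ^ 2 := by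
      rw [inner_neg_right, real_inner_smul_right, real_inner_self_eq_norm_sq]; ring
    have hnr : ‖-((1/L) • g)‖ ^ 2 = (1/L) ^ 2 * ‖g‖ ^ 2 := by
      rw [norm_neg, norm_smul, Real.norm_eq_abs, abs_of_pos (by positivity : (0:ℝ) < 1/L)]
      ring
    rw [hin, hnr] at hd
    have h2 := hmin' (x - (1/L) • g)
    have hL' : L ≠ 0 := hL.ne'
    have : F x - F xs ≥ (1/L) * ‖g‖^2 - L/2 * ((1/L)^2 * ‖g‖^2) := by linarith
    have heq : (1/L) * ‖g‖^2 - L/2 * ((1/L)^2 * ‖g‖^2) = 1/(2*L) * ‖g‖^2 := by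
      field_simp; ring
    linarith [heq ▸ this]
  -- key coercivity inequality
  have hkey : μ / 2 * ‖x - xs‖ ^ 2 + 1 / (2 * L) * ‖g‖ ^ 2 ≤ ⟪g, x - xs⟫ := by
    have := hsc x xs
    have hin : ⟪g, xs - x⟫ = -⟪g, x - xs⟫ := by
      rw [← inner_neg_right, neg_sub]
    rw [hin] at this
    rw [norm_sub_rev xs x] at this
    linarith
  -- algebraic expansion
  have hna : (0:ℝ) ≤ (n : ℝ) * α := by positivity
  set a := x - xs with ha
  set b := ((n:ℝ) * α) • g + α • R with hb
  have hxpb : xp - xs = a - b := by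
    have hs : α • ((n:ℝ) • g + R) = ((n:ℝ) * α) • g + α • R := by
      rw [smul_add, smul_smul, mul_comm]
    rw [hxp, hs, ha, hb, sub_right_comm]
  have hexp : ‖xp - xs‖ ^ 2 = ‖a‖ ^ 2 - 2 * ⟪a, b⟫ + ‖b‖ ^ 2 := by
    rw [hxpb, norm_sub_sq_real]
  have hab : ⟪a, b⟫ = (n:ℝ) * α * ⟪g, a⟫ + α * ⟪a, R⟫ := by
    rw [hb, inner_add_right, real_inner_smul_right, real_inner_smul_right,
      real_inner_comm a g]
  have hbsq : ‖b‖ ^ 2 ≤ 2 * ((n:ℝ) * α) ^ 2 * ‖g‖ ^ 2 + 2 * α ^ 2 * ‖R‖ ^ 2 := by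
    have h1 : ‖b‖ ≤ ‖((n:ℝ) * α) • g‖ + ‖α • R‖ := norm_add_le _ _
    have h2 : ‖((n:ℝ) * α) • g‖ = (n:ℝ) * α * ‖g‖ := by
      rw [norm_smul, Real.norm_eq_abs, abs_of_nonneg hna]
    have h3 : ‖α • R‖ = α * ‖R‖ := by
      rw [norm_smul, Real.norm_eq_abs, abs_of_pos hα]
    rw [h2, h3] at h1
    nlinarith [norm_nonneg b, norm_nonneg g, norm_nonneg R,
      sq_nonneg ((n:ℝ) * α * ‖g‖ - α * ‖R‖)]
  have hcoer : (n:ℝ) * α * (μ / 2 * ‖a‖ ^ 2 + 1 / (2 * L) * ‖g‖ ^ 2) ≤ (n:ℝ) * α * ⟪g, a⟫ :=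
    mul_le_mul_of_nonneg_left hkey hna
  have hfin : (n:ℝ) * α * (1 / L) = 2 * ((n:ℝ) * α * (1 / (2 * L))) := by
    field_simp
  rw [hexp, hab]
  have : (1 - n * α * μ) * ‖a‖ ^ 2 - n * α * (1 / L - 2 * n * α) * ‖g‖ ^ 2
      = ‖a‖ ^ 2 - 2 * ((n:ℝ) * α * (μ / 2 * ‖a‖ ^ 2 + 1 / (2 * L) * ‖g‖ ^ 2))
        + 2 * ((n:ℝ) * α) ^ 2 * ‖g‖ ^ 2 := by
    field_simp
    ring
  nlinarith [hcoer, hbsq]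
end

section
/- Let α ≤ 1/L and L ≥ 1. Consider two coupled sequences on ℝ: x_{t+1} = (1 − α·c(x_t))·x_t + d_t with c(x) = L if x < 0 and c(x) = 1 if x ≥ 0, and y_{t+1} = (1 − α)·y_t + d_t, where (d_t) is an arbitrary shared real sequence and x_0 = y_0 = 0. Then x_t ≥ y_t for all t ≥ 0. -/
/-- coupling domination for the piecewise-quadratic dynamics. -/
theorem stmt_15 (L α : ℝ) (hL : 1 ≤ L) (hα0 : 0 ≤ α) (hα : α ≤ 1 / L)
    (d : ℕ → ℝ) (x y : ℕ → ℝ) (hx0 : x 0 = 0) (hy0 : y 0 = 0)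
    (hx : ∀ t, x (t + 1) = (1 - α * (if x t < 0 then L else 1)) * x t + d t)
    (hy : ∀ t, y (t + 1) = (1 - α) * y t + d t) :
    ∀ t, x t ≥ y t := by
  have hL0 : (0:ℝ) < L := lt_of_lt_of_le one_pos hL
  have hαL : α * L ≤ 1 := by
    have := (le_div_iff₀ hL0).mp hα; linarith
  have hα1 : α ≤ 1 := le_trans (le_mul_of_one_le_right hα0 hL) hαL
  intro t
  induction t with
  | zero => rw [hx0, hy0]
  | succ n ih =>
    rw [hx n, hy n]
    have h1 : (0:ℝ) ≤ 1 - α := by linarith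
    by_cases hxn : x n < 0
    · simp only [if_pos hxn]
      have hyx : (1 - α) * y n ≤ (1 - α) * x n := mul_le_mul_of_nonneg_left ih h1
      have : (1 - α) * x n ≤ (1 - α * L) * x n := by
        have : α ≤ α * L := le_mul_of_one_le_right hα0 hL
        nlinarith
      linarith
    · simp only [if_neg hxn]
      have := mul_le_mul_of_nonneg_left ih h1
      nlinarith
end
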